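/- Soundness and completeness of D-GMSR for a single conjunction: for real-valued C^1 predicate functions f_1,…,f_m on R^n and any x ∈ R^n, the Boolean formula (f_1(x) ≥ 0) ∧ … ∧ (f_m(x) ≥ 0) restricted to strict signs satisfies: h∧((f_1(x),…,f_m(x))) > 0 implies f_i(x) > 0 for all i (hence the conjunction holds), and h∧((f_1(x),…,f_m(x))) < 0 implies f_i(x) < 0 for some i (hence the conjunction fails). -/
import Mathlib


open Finset Real Filter Topology

noncomputable def M0 {n : ℕ} (ε : ℝ) (w : Fin n → ℕ) (z : Fin n → ℝ) : ℝ :=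
  (ε ^ (∑ i, w i) + ∏ i, z i ^ w i) ^ ((1 : ℝ) / (∑ i, w i))

noncomputable def Mp {n : ℕ} (ε : ℝ) (p : ℕ) (w : Fin n → ℕ) (z : Fin n → ℝ) : ℝ :=
  (ε ^ p + (1 / (∑ i, (w i : ℝ))) * ∑ i, (w i : ℝ) * z i ^ p) ^ ((1 : ℝ) / p)

noncomputable def posSq {n : ℕ} (y : Fin n → ℝ) : Fin n → ℝ := fun i => max (y i) 0 ^ 2

noncomputable def negSq {n : ℕ} (y : Fin n → ℝ) : Fin n → ℝ := fun i => min (y i) 0 ^ 2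

noncomputable def hConj {n : ℕ} (ε : ℝ) (p : ℕ) (w : Fin n → ℕ) (y : Fin n → ℝ) : ℝ :=
  M0 ε w (posSq y) ^ ((1 : ℝ) / 2) - Mp ε p w (negSq y) ^ ((1 : ℝ) / 2)

noncomputable def hDisj {n : ℕ} (ε : ℝ) (p : ℕ) (w : Fin n → ℕ) (y : Fin n → ℝ) : ℝ :=
  - hConj ε p w (fun i => - y i)

theorem hConj_sound_complete_conjunction {d m : ℕ} (hm : 0 < m)
    (ε : ℝ) (hε : 0 < ε) (p : ℕ) (hp : 0 < p) (w : Fin m → ℕ) (hw : ∀ i, 0 < w i)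
    (f : Fin m → (Fin d → ℝ) → ℝ) (hf : ∀ i, ContDiff ℝ 1 (f i)) (x : Fin d → ℝ) :
    (0 < hConj ε p w (fun i => f i x) → ∀ i, 0 < f i x) ∧
    (hConj ε p w (fun i => f i x) < 0 → ∃ i, f i x < 0) := by

  set y : Fin m → ℝ := fun i => f i x with hy
  have hS : 0 < ∑ i, w i := Finset.sum_pos (fun i _ => hw i) ⟨⟨0, hm⟩, Finset.mem_univ _⟩
  have hεS : ((ε ^ (∑ i, w i) : ℝ)) ^ ((1:ℝ)/(∑ i, w i)) = ε := by
    rw [← Real.rpow_natCast ε, ← Real.rpow_mul hε.le, mul_one_div, div_self, Real.rpow_one]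
    exact_mod_cast hS.ne'
  have hεp : ((ε ^ p : ℝ)) ^ ((1:ℝ)/p) = ε := by
    rw [← Real.rpow_natCast ε, ← Real.rpow_mul hε.le, mul_one_div, div_self, Real.rpow_one]
    exact_mod_cast hp.ne'
  have hSR : (0:ℝ) < ∑ i, (w i : ℝ) := by
    have := hS; exact_mod_cast this
  constructor
  · intro hpos i
    by_contra hle
    push_neg at hle
    have h0 : M0 ε w (posSq y) = ε := by
      unfold M0 posSq
      have hprod : ∏ j, (max (y j) 0 ^ 2) ^ w j = 0 := by
        apply Finset.prod_eq_zero (Finset.mem_univ i)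
        rw [max_eq_right hle]
        simp [zero_pow (hw i).ne']
      rw [hprod, add_zero, hεS]
    have hMp : ε ≤ Mp ε p w (negSq y) := by
      unfold Mp negSq
      nth_rewrite 1 [← hεp]
      apply Real.rpow_le_rpow (by positivity)
      · have : 0 ≤ (1 / (∑ i, (w i : ℝ))) * ∑ i, (w i : ℝ) * (min (y i) 0 ^ 2) ^ p := by
          positivity
        linarith
      · positivity
    have : hConj ε p w y ≤ 0 := by
      unfold hConj
      have h1 : M0 ε w (posSq y) ^ ((1:ℝ)/2) ≤ Mp ε p w (negSq y) ^ ((1:ℝ)/2) := by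
        apply Real.rpow_le_rpow (by rw [h0]; exact hε.le) (by rw [h0]; exact hMp)
        norm_num
      linarith
    exact absurd hpos (by simpa [hy] using this.not_gt)
  · intro hneg
    by_contra hall
    push_neg at hall
    have hMp : Mp ε p w (negSq y) = ε := by
      unfold Mp negSq
      have hsum : ∑ i, (w i : ℝ) * (min (y i) 0 ^ 2) ^ p = 0 := by
        apply Finset.sum_eq_zero
        intro i _
        rw [min_eq_right (hall i)]
        simp [zero_pow hp.ne']
      rw [hsum, mul_zero, add_zero, hεp]
    have hM0 : ε ≤ M0 ε w (posSq y) := by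
      unfold M0 posSq
      nth_rewrite 1 [← hεS]
      apply Real.rpow_le_rpow (by positivity)
      · have : 0 ≤ ∏ j, (max (y j) 0 ^ 2) ^ w j := by positivity
        linarith
      · positivity
    have : 0 ≤ hConj ε p w y := by
      unfold hConj
      have h1 : Mp ε p w (negSq y) ^ ((1:ℝ)/2) ≤ M0 ε w (posSq y) ^ ((1:ℝ)/2) := by
        apply Real.rpow_le_rpow (by rw [hMp]; exact hε.le) (by rw [hMp]; exact hM0)
        norm_num
      linarith
    exact absurd hneg (by simpa [hy] using this.not_gt)
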